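/- Let S := {2} ∪ {p ∈ ℕ | p prime, p ≡ 1 (mod 4)} and T := {p ∈ ℕ | p prime, p ≡ 3 (mod 4)}. Then M(S ∪ T) is a proper subset of M(S) ∪ M(T); that is, M(S ∪ T) ⊆ M(S) ∪ M(T) holds but M(S ∪ T) ≠ M(S) ∪ M(T). -/
import Mathlib


/-- `Subseq x y` means the decimal digit string of `x` is a subsequence of that of `y`. -/
def Subseq (x y : ℕ) : Prop := (Nat.digits 10 x).Sublist (Nat.digits 10 y)

/-- The minimal set of `S`: elements of `S` containing no smaller element of `S`
as a subsequence of their decimal digits. -/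
def minimalSet (S : Set ℕ) : Set ℕ := {s ∈ S | ¬ ∃ n ∈ S, n < s ∧ Subseq n s}

lemma minimalSet_union_subset (A B : Set ℕ) :
    minimalSet (A ∪ B) ⊆ minimalSet A ∪ minimalSet B := by
  rintro s ⟨hs | hs, hmin⟩
  · exact Or.inl ⟨hs, fun ⟨n, hn, h1, h2⟩ => hmin ⟨n, Or.inl hn, h1, h2⟩⟩
  · exact Or.inr ⟨hs, fun ⟨n, hn, h1, h2⟩ => hmin ⟨n, Or.inr hn, h1, h2⟩⟩

theorem minimalSet_union_ssubset_example :
    minimalSet (({2} ∪ {p : ℕ | p.Prime ∧ p % 4 = 1}) ∪ {p : ℕ | p.Prime ∧ p % 4 = 3}) ⊂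
      minimalSet ({2} ∪ {p : ℕ | p.Prime ∧ p % 4 = 1}) ∪
        minimalSet {p : ℕ | p.Prime ∧ p % 4 = 3} := by
  refine (Set.ssubset_iff_of_subset (minimalSet_union_subset _ _)).mpr ⟨13, ?_, ?_⟩
  · -- 13 ∈ minimalSet S
    refine Or.inl ⟨Or.inr ⟨by norm_num, rfl⟩, ?_⟩
    rintro ⟨n, hn, hlt, hsub⟩
    rcases hn with rfl | ⟨hp, h4⟩
    · revert hsub; unfold Subseq; simp
    · interval_cases n <;> first | omega | (revert hsub; unfold Subseq; simp; done) | (exact absurd hp (by norm_num))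
  · -- 13 ∉ minimalSet (S ∪ T)
    rintro ⟨-, hmin⟩
    exact hmin ⟨3, Or.inr ⟨by norm_num, rfl⟩, by norm_num, by unfold Subseq; simp⟩
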